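/- arXiv:1304.0236 — 3 statements merged into one kernel-verified Lean document; each statement's English description precedes it below -/
import Mathlib

section
/- Let X be a smooth manifold and ω a closed differential (n+1)-form on X. If v₁ and v₂ are Hamiltonian vector fields for ω (i.e. there exist (n−1)-forms h₁, h₂ with ι_{v₁}ω + dh₁ = 0 and ι_{v₂}ω + dh₂ = 0), then the Lie bracket [v₁, v₂] is again a Hamiltonian vector field, with Hamiltonian form ι_{v₁ ∧ v₂}ω = ι_{v₂}ι_{v₁}ω (up to sign conventions): ι_{[v₁,v₂]}ω + d(ι_{v₂}ι_{v₁}ω) = 0. -/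
/-- Abstract Cartan-calculus model of a smooth manifold `X`:
`Ω k` is the space of differential `k`-forms, `d` the de Rham differential,
`ι` the interior product by vector fields `V` (a Lie algebra), subject to
`d ∘ d = 0`, the Cartan magic formula `L_v = d ι_v + ι_v d` and
`ι_{[v,w]} = [L_v, ι_w]`, and graded skewness of contractions.

Statement: if `ω` is a closed `(m+2)`-form (a pre-`(m+1)`-plectic form) and
`v₁, v₂` are Hamiltonian vector fields with Hamiltonian `m`-forms `h₁, h₂`
(`ι_{vᵢ} ω + d hᵢ = 0`), then `[v₁,v₂]` is again Hamiltonian, with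
Hamiltonian form `ι_{v₂} ι_{v₁} ω`. -/
theorem bracket_of_hamiltonian_is_hamiltonian
    {V : Type*} [LieRing V]
    {Ω : ℕ → Type*} [∀ k, AddCommGroup (Ω k)]
    (d : ∀ {k : ℕ}, Ω k → Ω (k + 1))
    (ι : ∀ {k : ℕ}, V → Ω (k + 1) → Ω k)
    (hd_add : ∀ {k : ℕ} (a b : Ω k), d (a + b) = d a + d b)
    (hι_add : ∀ {k : ℕ} (v : V) (a b : Ω (k + 1)), ι v (a + b) = ι v a + ι v b)
    (hdd : ∀ {k : ℕ} (a : Ω k), d (d a) = (0 : Ω (k + 2)))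
    (hι_skew : ∀ {k : ℕ} (v w : V) (a : Ω (k + 2)), ι v (ι w a) = - ι w (ι v a))
    (hcartan : ∀ {k : ℕ} (v w : V) (a : Ω (k + 2)),
      ι ⁅v, w⁆ a
        = (d (ι v (ι w a)) + ι v (d (ι w a)))
            - ι w (d (ι v a) + ι v (d a)))
    {m : ℕ} (ω : Ω (m + 2)) (hω : d ω = 0)
    (v₁ v₂ : V) (h₁ h₂ : Ω m)
    (hv₁ : ι v₁ ω + d h₁ = 0) (hv₂ : ι v₂ ω + d h₂ = 0) :
    ι ⁅v₁, v₂⁆ ω + d (ι v₂ (ι v₁ ω)) = 0 := by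
  have d0 : ∀ {k : ℕ}, d (0 : Ω k) = 0 := by
    intro k
    have h := (hd_add (0 : Ω k) 0).symm
    simpa using h
  have ι0 : ∀ {k : ℕ} (v : V), ι v (0 : Ω (k + 1)) = 0 := by
    intro k v
    have h := (hι_add v (0 : Ω (k + 1)) 0).symm
    simpa using h
  have dneg : ∀ {k : ℕ} (a : Ω k), d (-a) = - d a := by
    intro k a
    have h := hd_add a (-a)
    rw [add_neg_cancel, d0] at h
    exact (neg_eq_of_add_eq_zero_right h.symm).symm
  have e1 : ι v₁ ω = - d h₁ := eq_neg_of_add_eq_zero_left hv₁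
  have e2 : ι v₂ ω = - d h₂ := eq_neg_of_add_eq_zero_left hv₂
  have dι1 : d (ι v₁ ω) = 0 := by rw [e1, dneg, hdd, neg_zero]
  have dι2 : d (ι v₂ ω) = 0 := by rw [e2, dneg, hdd, neg_zero]
  have hc := hcartan v₁ v₂ ω
  rw [dι1, dι2, hω, ι0, ι0, add_zero, add_zero, ι0, sub_zero] at hc
  rw [hc, hι_skew, dneg]
  exact neg_add_cancel _
end

section
/- Let (X, ω) be a pre-n-plectic manifold. On the space Ω^{n−1}_{Ham}(X) = {(v,h) ∈ Γ(TX) ⊕ Ω^{n−1}(X) | ι_v ω + dh = 0}, the bracket [(v₁,h₁),(v₂,h₂)] := ([v₁,v₂], ι_{v₁∧v₂}ω) is well-defined, i.e. the pair ([v₁,v₂], ι_{v₂}ι_{v₁}ω) again satisfies the Hamiltonian pair condition ι_{[v₁,v₂]}ω + d(ι_{v₂}ι_{v₁}ω) = 0. -/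
/-- Abstract Cartan-calculus model of a pre-`n`-plectic manifold `(X, ω)`
(`Ω k` = `k`-forms, `d` = de Rham differential, `ι` = interior product by
vector fields `V`, with the Cartan calculus identities as hypotheses).

Statement: the bracket `[(v₁,h₁),(v₂,h₂)] := ([v₁,v₂], ι_{v₁∧v₂}ω)`
(with `ι_{v₁∧v₂}ω = ι_{v₂}ι_{v₁}ω`) on Hamiltonian pairs is well defined:
if `ι_{v₁}ω + d h₁ = 0` and `ι_{v₂}ω + d h₂ = 0`, then the pair
`([v₁,v₂], ι_{v₂}ι_{v₁}ω)` again satisfies the Hamiltonian pair condition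
`ι_{[v₁,v₂]}ω + d (ι_{v₂}ι_{v₁}ω) = 0`. -/
theorem hamiltonian_pair_bracket_well_defined
    {V : Type*} [LieRing V]
    {Ω : ℕ → Type*} [∀ k, AddCommGroup (Ω k)]
    (d : ∀ {k : ℕ}, Ω k → Ω (k + 1))
    (ι : ∀ {k : ℕ}, V → Ω (k + 1) → Ω k)
    (hd_add : ∀ {k : ℕ} (a b : Ω k), d (a + b) = d a + d b)
    (hι_add : ∀ {k : ℕ} (v : V) (a b : Ω (k + 1)), ι v (a + b) = ι v a + ι v b)
    (hdd : ∀ {k : ℕ} (a : Ω k), d (d a) = (0 : Ω (k + 2)))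
    (hι_skew : ∀ {k : ℕ} (v w : V) (a : Ω (k + 2)), ι v (ι w a) = - ι w (ι v a))
    (hcartan : ∀ {k : ℕ} (v w : V) (a : Ω (k + 2)),
      ι ⁅v, w⁆ a
        = (d (ι v (ι w a)) + ι v (d (ι w a)))
            - ι w (d (ι v a) + ι v (d a)))
    {m : ℕ} (ω : Ω (m + 2)) (hω : d ω = 0)
    (v₁ v₂ : V) (h₁ h₂ : Ω m)
    (hv₁ : ι v₁ ω + d h₁ = 0) (hv₂ : ι v₂ ω + d h₂ = 0) :
    ι ⁅v₁, v₂⁆ ω + d (ι v₂ (ι v₁ ω)) = 0 := by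
  have d0 : ∀ {k : ℕ}, d (0 : Ω k) = 0 := by
    intro k
    have h := hd_add (0 : Ω k) 0
    rw [add_zero] at h
    exact right_eq_add.mp h
  have i0 : ∀ {k : ℕ} (v : V), ι v (0 : Ω (k + 1)) = 0 := by
    intro k v
    have h := hι_add v (0 : Ω (k + 1)) 0
    rw [add_zero] at h
    exact right_eq_add.mp h
  have dneg : ∀ {k : ℕ} (a : Ω k), d (-a) = - d a := by
    intro k a
    have h := hd_add a (-a)
    rw [add_neg_cancel, d0] at h
    exact (neg_eq_of_add_eq_zero_right h.symm).symm
  have e1 : ι v₁ ω = - d h₁ := eq_neg_of_add_eq_zero_left hv₁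
  have e2 : ι v₂ ω = - d h₂ := eq_neg_of_add_eq_zero_left hv₂
  have hdι1 : d (ι v₁ ω) = 0 := by rw [e1, dneg, hdd, neg_zero]
  have hdι2 : d (ι v₂ ω) = 0 := by rw [e2, dneg, hdd, neg_zero]
  have hc := hcartan v₁ v₂ ω
  rw [hω, hdι1, hdι2, hι_skew v₁ v₂ ω, dneg] at hc
  simp only [i0, zero_add, add_zero, sub_zero] at hc
  rw [hc]
  abel
end

section
/- For a pre-2-plectic manifold (X, ω) (ω a closed 3-form), the bracket [(v₁,h₁),(v₂,h₂)] = ([v₁,v₂], ι_{v₂}ι_{v₁}ω) on Hamiltonian pairs is skew-symmetric but in general fails the Jacobi identity by an exact term: the Jacobiator J((v₁,h₁),(v₂,h₂),(v₃,h₃)) equals −d(ι_{v₃}ι_{v₂}ι_{v₁}ω) in the Ω^1-component, i.e. the sum of cyclic permutations of [[(v₁,h₁),(v₂,h₂)],(v₃,h₃)] has vector-field component zero and 1-form component equal to an exact 1-form d(ι_{v₃}ι_{v₂}ι_{v₁}ω) up to sign. -/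
/-- Abstract Cartan-calculus model of a pre-`2`-plectic manifold `(X, ω)`:
`Ω k` = differential `k`-forms, `d` = de Rham differential, `ι` = interior
product by vector fields `V`, with the Cartan calculus identities as
hypotheses; `ω` is a closed 3-form.  Hamiltonian pairs `(v, h) ∈ Γ(TX) ⊕ Ω¹`
satisfy `ι_v ω + d h = 0` and carry the bracket
`[(v₁,h₁),(v₂,h₂)] := ([v₁,v₂], ι_{v₂}ι_{v₁}ω)`.

Statement: this bracket is skew-symmetric, but the Jacobi identity fails by
an exact term: the cyclic sum of nested brackets has vanishing vector-field
component, while its 1-form component is the exact 1-form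
`d(ι_{v₃}ι_{v₂}ι_{v₁}ω)` up to sign. -/
theorem pre_two_plectic_bracket_skew_and_jacobiator_exact
    {V : Type*} [LieRing V]
    {Ω : ℕ → Type*} [∀ k, AddCommGroup (Ω k)]
    (d : ∀ {k : ℕ}, Ω k → Ω (k + 1))
    (ι : ∀ {k : ℕ}, V → Ω (k + 1) → Ω k)
    (hd_add : ∀ {k : ℕ} (a b : Ω k), d (a + b) = d a + d b)
    (hι_add : ∀ {k : ℕ} (v : V) (a b : Ω (k + 1)), ι v (a + b) = ι v a + ι v b)
    (hι_v_add : ∀ {k : ℕ} (v w : V) (a : Ω (k + 1)), ι (v + w) a = ι v a + ι w a)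
    (hdd : ∀ {k : ℕ} (a : Ω k), d (d a) = (0 : Ω (k + 2)))
    (hι_skew : ∀ {k : ℕ} (v w : V) (a : Ω (k + 2)), ι v (ι w a) = - ι w (ι v a))
    (hcartan : ∀ {k : ℕ} (v w : V) (a : Ω (k + 2)),
      ι ⁅v, w⁆ a
        = (d (ι v (ι w a)) + ι v (d (ι w a)))
            - ι w (d (ι v a) + ι v (d a)))
    (ω : Ω 3) (hω : d ω = 0)
    (v₁ v₂ v₃ : V) (h₁ h₂ h₃ : Ω 1)
    (hv₁ : ι v₁ ω + d h₁ = 0) (hv₂ : ι v₂ ω + d h₂ = 0) (hv₃ : ι v₃ ω + d h₃ = 0) :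
    -- skew-symmetry of the bracket on Hamiltonian pairs
    ((⁅v₁, v₂⁆, ι v₂ (ι v₁ ω)) = -((⁅v₂, v₁⁆, ι v₁ (ι v₂ ω)) : V × Ω 1))
    -- the Jacobiator: vanishing vector-field component
    ∧ (⁅⁅v₁, v₂⁆, v₃⁆ + ⁅⁅v₂, v₃⁆, v₁⁆ + ⁅⁅v₃, v₁⁆, v₂⁆ = (0 : V))
    -- ... and exact 1-form component, up to sign
    ∧ (ι v₃ (ι ⁅v₁, v₂⁆ ω) + ι v₁ (ι ⁅v₂, v₃⁆ ω) + ι v₂ (ι ⁅v₃, v₁⁆ ω)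
          = d (ι v₃ (ι v₂ (ι v₁ ω)))
        ∨ ι v₃ (ι ⁅v₁, v₂⁆ ω) + ι v₁ (ι ⁅v₂, v₃⁆ ω) + ι v₂ (ι ⁅v₃, v₁⁆ ω)
          = - d (ι v₃ (ι v₂ (ι v₁ ω)))) := by
  -- helper facts from additivity
  have hι0 : ∀ {k : ℕ} (v : V), ι v (0 : Ω (k + 1)) = 0 := by
    intro k v
    have h := hι_add v (0 : Ω (k + 1)) 0
    simpa using h.symm
  have hιneg : ∀ {k : ℕ} (v : V) (a : Ω (k + 1)), ι v (-a) = - ι v a := by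
    intro k v a
    have h : ι v a + ι v (-a) = 0 := by
      rw [← hι_add, add_neg_cancel, hι0]
    exact (neg_eq_of_add_eq_zero_right h).symm
  have hd0 : ∀ {k : ℕ}, d (0 : Ω k) = 0 := by
    intro k
    have h := hd_add (0 : Ω k) 0
    simpa using h.symm
  have hdneg : ∀ {k : ℕ} (a : Ω k), d (-a) = - d a := by
    intro k a
    have h : d a + d (-a) = 0 := by
      rw [← hd_add, add_neg_cancel, hd0]
    exact (neg_eq_of_add_eq_zero_right h).symm
  -- closedness of ι vᵢ ω
  have hcl : ∀ (v : V) (h : Ω 1), ι v ω + d h = 0 → d (ι v ω) = 0 := by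
    intro v h hv
    have hv' : ι v ω = - d h := eq_neg_of_add_eq_zero_left hv
    rw [hv', hdneg, hdd, neg_zero]
  have hcl₁ := hcl v₁ h₁ hv₁
  have hcl₂ := hcl v₂ h₂ hv₂
  have hcl₃ := hcl v₃ h₃ hv₃
  -- ι of a bracket is exact
  have hbr : ∀ (v w : V), d (ι v ω) = 0 → d (ι w ω) = 0 →
      ι ⁅v, w⁆ ω = d (ι v (ι w ω)) := by
    intro v w hv hw
    have h := hcartan v w ω
    simp only [hω, hv, hw, hι0, add_zero, sub_zero] at h
    exact h
  have h12 : ι ⁅v₁, v₂⁆ ω = d (ι v₁ (ι v₂ ω)) := hbr v₁ v₂ hcl₁ hcl₂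
  have h23 : ι ⁅v₂, v₃⁆ ω = d (ι v₂ (ι v₃ ω)) := hbr v₂ v₃ hcl₂ hcl₃
  have h31 : ι ⁅v₃, v₁⁆ ω = d (ι v₃ (ι v₁ ω)) := hbr v₃ v₁ hcl₃ hcl₁
  refine ⟨?_, ?_, ?_⟩
  · -- skew-symmetry
    have hneg : -((⁅v₂, v₁⁆, ι v₁ (ι v₂ ω)) : V × Ω 1)
        = (-⁅v₂, v₁⁆, -ι v₁ (ι v₂ ω)) := rfl
    rw [hneg, Prod.mk.injEq]
    exact ⟨(lie_skew v₁ v₂).symm, hι_skew v₂ v₁ ω⟩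
  · -- Jacobi identity for the vector fields
    have hj := lie_jacobi v₁ v₂ v₃
    have e1 : ⁅⁅v₁, v₂⁆, v₃⁆ = -⁅v₃, ⁅v₁, v₂⁆⁆ := (lie_skew _ _).symm
    have e2 : ⁅⁅v₂, v₃⁆, v₁⁆ = -⁅v₁, ⁅v₂, v₃⁆⁆ := (lie_skew _ _).symm
    have e3 : ⁅⁅v₃, v₁⁆, v₂⁆ = -⁅v₂, ⁅v₃, v₁⁆⁆ := (lie_skew _ _).symm
    have hgoal : ⁅⁅v₁, v₂⁆, v₃⁆ + ⁅⁅v₂, v₃⁆, v₁⁆ + ⁅⁅v₃, v₁⁆, v₂⁆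
        = -(⁅v₁, ⁅v₂, v₃⁆⁆ + ⁅v₂, ⁅v₃, v₁⁆⁆ + ⁅v₃, ⁅v₁, v₂⁆⁆) := by
      rw [e1, e2, e3]; abel
    rw [hgoal, hj, neg_zero]
  · -- the exact 1-form component
    left
    -- Cartan identity applied to the closed 2-form ι v₂ ω
    have hE := hcartan v₃ v₁ (ι v₂ ω)
    rw [hcl₂, hι0, add_zero] at hE
    have hL : ι ⁅v₃, v₁⁆ (ι v₂ ω) = - ι v₂ (d (ι v₃ (ι v₁ ω))) := by
      rw [hι_skew ⁅v₃, v₁⁆ v₂ ω, h31]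
    rw [hL] at hE
    have hsw : ι v₁ (d (ι v₃ (ι v₂ ω))) = - ι v₁ (d (ι v₂ (ι v₃ ω))) := by
      rw [hι_skew v₃ v₂ ω, hdneg, hιneg]
    rw [hsw] at hE
    have hDD : d (ι v₃ (ι v₂ (ι v₁ ω))) = - d (ι v₃ (ι v₁ (ι v₂ ω))) := by
      rw [hι_skew v₁ v₂ ω, hιneg, hdneg, neg_neg]
    rw [h12, h23, h31, hDD, eq_neg_iff_add_eq_zero]
    set T := ι v₃ (d (ι v₁ (ι v₂ ω))) with hT
    set B := ι v₂ (d (ι v₃ (ι v₁ ω))) with hB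
    set C := ι v₁ (d (ι v₂ (ι v₃ ω))) with hC
    set D := d (ι v₃ (ι v₁ (ι v₂ ω))) with hD
    -- hE : -B = D + T - -C
    have h0 : T + C + B + D = -B + B := by rw [hE]; abel
    rw [h0, neg_add_cancel]
end
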